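/- Let Hᵢ (0 ≤ i ≤ N−1) be finite sets of integers containing 0 and having the unique-difference-representation property: ∑(dᵢ − dᵢ') = ∑(eᵢ − eᵢ') with dᵢ, dᵢ', eᵢ, eᵢ' ∈ Hᵢ implies dᵢ − dᵢ' = eᵢ − eᵢ' for all i. Fix j < N and set D_J = H_j ⊕ … ⊕ H_{N−1} and D_I = H₀ ⊕ … ⊕ H_{N−1} (iterated sumsets, which have cardinality ∏|Hᵢ| by unique representation). Then for any integer k with |D_J ∩ (k + D_J)| > 0, one has |D_J ∩ (k + D_J)| / |D_I ∩ (k + D_I)| = 1 / ∏_{i=0}^{j−1} |Hᵢ|. -/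

import Mathlib

open Pointwise

/-- The iterated sumset `H a ⊕ H (a+1) ⊕ … ⊕ H (a+n-1)`. -/
def sumsetFrom (H : ℕ → Finset ℤ) : ℕ → ℕ → Finset ℤ
  | _, 0 => {0}
  | a, n + 1 => sumsetFrom H a n + H (a + n)

lemma mem_sumsetFrom (H : ℕ → Finset ℤ) (a n : ℕ) (x : ℤ) :
    x ∈ sumsetFrom H a n ↔ ∃ f : ℕ → ℤ,
      (∀ i ∈ Finset.Ico a (a + n), f i ∈ H i) ∧
      (∀ i, i ∉ Finset.Ico a (a + n) → f i = 0) ∧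
      x = ∑ i ∈ Finset.Ico a (a + n), f i := by
  induction n generalizing x with
  | zero =>
    constructor
    · intro hx
      simp only [sumsetFrom, Finset.mem_singleton] at hx
      exact ⟨fun _ => 0, by simp, by simp, by simp [hx]⟩
    · rintro ⟨f, _, _, rfl⟩
      simp [sumsetFrom]
  | succ n ih =>
    constructor
    · intro hx
      simp only [sumsetFrom, Finset.mem_add] at hx
      obtain ⟨y, hy, z, hz, hyz⟩ := hx
      obtain ⟨f, hf1, hf2, rfl⟩ := (ih y).1 hy
      refine ⟨Function.update f (a + n) z, ?_, ?_, ?_⟩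
      · intro i hi
        rcases eq_or_ne i (a + n) with rfl | hne
        · simpa using hz
        · rw [Function.update_of_ne hne]
          exact hf1 i (by simp at hi ⊢; omega)
      · intro i hi
        have hne : i ≠ a + n := by simp at hi; omega
        rw [Function.update_of_ne hne]
        exact hf2 i (by simp at hi ⊢; omega)
      · rw [← hyz, show a + (n + 1) = (a + n) + 1 by omega,
          Finset.sum_Ico_succ_top (by omega : a ≤ a + n), Function.update_self]
        congr 1
        apply Finset.sum_congr rfl
        intro i hi
        rw [Function.update_of_ne (by simp at hi; omega)]
    · rintro ⟨f, hf1, hf2, rfl⟩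
      simp only [sumsetFrom, Finset.mem_add]
      refine ⟨∑ i ∈ Finset.Ico a (a + n), f i, ?_, f (a + n), ?_, ?_⟩
      · refine (ih _).2 ⟨fun i => if i = a + n then 0 else f i, ?_, ?_, ?_⟩
        · intro i hi
          dsimp only
          rw [if_neg (by simp at hi; omega)]
          exact hf1 i (by simp at hi ⊢; omega)
        · intro i hi
          dsimp only
          rcases eq_or_ne i (a + n) with rfl | hne
          · simp
          · rw [if_neg hne]; exact hf2 i (by simp at hi ⊢; omega)
        · apply Finset.sum_congr rfl
          intro i hi
          dsimp only
          rw [if_neg (by simp at hi; omega)]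
      · exact hf1 (a + n) (by simp)
      · rw [show a + (n + 1) = (a + n) + 1 by omega,
          Finset.sum_Ico_succ_top (by omega : a ≤ a + n)]

lemma sumsetFrom_decomp (H : ℕ → Finset ℤ) (a m : ℕ) :
    ∀ n, sumsetFrom H a (m + n) = sumsetFrom H a m + sumsetFrom H (a + m) n := by
  intro n
  induction n with
  | zero =>
    show sumsetFrom H a m = sumsetFrom H a m + ({0} : Finset ℤ)
    ext x
    simp [Finset.mem_add]
  | succ n ih =>
    show sumsetFrom H a (m + n) + H (a + (m + n)) = _
    rw [ih, add_assoc]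
    congr 1
    show _ = sumsetFrom H (a + m) n + H ((a + m) + n)
    rw [show a + (m + n) = (a + m) + n by omega]

lemma sum_rep (N : ℕ) (H : ℕ → Finset ℤ) (h0 : ∀ i, i < N → (0 : ℤ) ∈ H i)
    (a n : ℕ) (hn : a + n ≤ N) (x : ℤ) (hx : x ∈ sumsetFrom H a n) :
    ∃ f : ℕ → ℤ, (∀ i, i < N → f i ∈ H i) ∧ (∀ i, (i < a ∨ a + n ≤ i) → f i = 0) ∧
      ∑ i ∈ Finset.range N, f i = x := by
  obtain ⟨f, hf1, hf2, rfl⟩ := (mem_sumsetFrom H a n x).1 hx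
  refine ⟨f, ?_, ?_, ?_⟩
  · intro i hi
    by_cases h : i ∈ Finset.Ico a (a + n)
    · exact hf1 i h
    · rw [hf2 i h]; exact h0 i hi
  · intro i hi
    exact hf2 i (by simp; omega)
  · exact (Finset.sum_subset
      (by rw [Finset.range_eq_Ico]; exact Finset.Ico_subset_Ico (by omega) (by omega))
      (fun i _ hi => hf2 i hi)).symm

lemma components_eq (N : ℕ) (H : ℕ → Finset ℤ)
    (h0 : ∀ i, i < N → (0 : ℤ) ∈ H i)
    (huniq : ∀ d d' e e' : ℕ → ℤ,
      (∀ i, i < N → d i ∈ H i) → (∀ i, i < N → d' i ∈ H i) →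
      (∀ i, i < N → e i ∈ H i) → (∀ i, i < N → e' i ∈ H i) →
      ∑ i ∈ Finset.range N, (d i - d' i) = ∑ i ∈ Finset.range N, (e i - e' i) →
      ∀ i, i < N → d i - d' i = e i - e' i)
    (d e : ℕ → ℤ)
    (hd : ∀ i, i < N → d i ∈ H i) (he : ∀ i, i < N → e i ∈ H i)
    (hsum : ∑ i ∈ Finset.range N, d i = ∑ i ∈ Finset.range N, e i) :
    ∀ i, i < N → d i = e i := by
  intro i hi
  have := huniq d (fun _ => 0) e (fun _ => 0) hd (fun i hi => h0 i hi) he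
    (fun i hi => h0 i hi) (by simpa using hsum) i hi
  simpa using this

lemma card_sumset (N : ℕ) (H : ℕ → Finset ℤ)
    (h0 : ∀ i, i < N → (0 : ℤ) ∈ H i)
    (huniq : ∀ d d' e e' : ℕ → ℤ,
      (∀ i, i < N → d i ∈ H i) → (∀ i, i < N → d' i ∈ H i) →
      (∀ i, i < N → e i ∈ H i) → (∀ i, i < N → e' i ∈ H i) →
      ∑ i ∈ Finset.range N, (d i - d' i) = ∑ i ∈ Finset.range N, (e i - e' i) →
      ∀ i, i < N → d i - d' i = e i - e' i) :
    ∀ n, n ≤ N → (sumsetFrom H 0 n).card = ∏ i ∈ Finset.range n, (H i).card := by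
  intro n
  induction n with
  | zero => simp [sumsetFrom]
  | succ n ih =>
    intro hn
    have hS : sumsetFrom H 0 (n + 1) = sumsetFrom H 0 n + H n := by
      show sumsetFrom H 0 n + H (0 + n) = _
      rw [Nat.zero_add]
    rw [hS, Finset.prod_range_succ, ← ih (by omega), ← Finset.card_product]
    apply (Finset.card_bij (fun p _ => p.1 + p.2) ?_ ?_ ?_).symm
    · intro p hp
      simp only [Finset.mem_product] at hp
      exact Finset.add_mem_add hp.1 hp.2
    · intro p hp q hq hpq
      simp only [Finset.mem_product] at hp hq
      obtain ⟨f, hf1, hf2, hf3⟩ := sum_rep N H h0 0 n (by omega) _ hp.1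
      obtain ⟨g, hg1, hg2, hg3⟩ := sum_rep N H h0 0 n (by omega) _ hq.1
      have hfn : f n = 0 := hf2 n (by omega)
      have hgn : g n = 0 := hg2 n (by omega)
      have hdm : ∀ i, i < N → (fun i => f i + if i = n then p.2 else 0) i ∈ H i := by
        intro i hi
        dsimp only
        rcases eq_or_ne i n with rfl | hne
        · rw [hfn, if_pos rfl, zero_add]; exact hp.2
        · rw [if_neg hne, add_zero]; exact hf1 i hi
      have hem : ∀ i, i < N → (fun i => g i + if i = n then q.2 else 0) i ∈ H i := by
        intro i hi
        dsimp only
        rcases eq_or_ne i n with rfl | hne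
        · rw [hgn, if_pos rfl, zero_add]; exact hq.2
        · rw [if_neg hne, add_zero]; exact hg1 i hi
      have hsum : ∑ i ∈ Finset.range N, (f i + if i = n then p.2 else 0)
          = ∑ i ∈ Finset.range N, (g i + if i = n then q.2 else 0) := by
        rw [Finset.sum_add_distrib, Finset.sum_add_distrib, hf3, hg3,
          Finset.sum_ite_eq' (Finset.range N) n (fun _ => p.2),
          Finset.sum_ite_eq' (Finset.range N) n (fun _ => q.2),
          if_pos (Finset.mem_range.2 (by omega)), if_pos (Finset.mem_range.2 (by omega))]
        exact hpq
      have hcomp := components_eq N H h0 huniq _ _ hdm hem hsum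
      have h2 : p.2 = q.2 := by
        have := hcomp n (by omega)
        simpa [hfn, hgn] using this
      have h1 : p.1 = q.1 := by
        have h := hpq
        rw [h2] at h
        exact add_right_cancel h
      exact Prod.ext h1 h2
    · intro b hb
      rw [Finset.mem_add] at hb
      obtain ⟨y, hy, z, hz, hyz⟩ := hb
      exact ⟨(y, z), Finset.mem_product.2 ⟨hy, hz⟩, hyz⟩

/-- With unique difference representation, for `D_J = H_j ⊕ … ⊕ H_{N-1}` and
`D_I = H_0 ⊕ … ⊕ H_{N-1}` and any `k` with `|D_J ∩ (k+D_J)| > 0`, the ratio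
`|D_J ∩ (k+D_J)| / |D_I ∩ (k+D_I)|` equals `1 / ∏_{i<j} |H_i|`. -/
theorem stmt_13 (N j : ℕ) (hj : j < N) (H : ℕ → Finset ℤ)
    (h0 : ∀ i, i < N → (0 : ℤ) ∈ H i)
    (huniq : ∀ d d' e e' : ℕ → ℤ,
      (∀ i, i < N → d i ∈ H i) → (∀ i, i < N → d' i ∈ H i) →
      (∀ i, i < N → e i ∈ H i) → (∀ i, i < N → e' i ∈ H i) →
      ∑ i ∈ Finset.range N, (d i - d' i) = ∑ i ∈ Finset.range N, (e i - e' i) →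
      ∀ i, i < N → d i - d' i = e i - e' i)
    (k : ℤ)
    (DJ DI : Finset ℤ) (hDJ : DJ = sumsetFrom H j (N - j)) (hDI : DI = sumsetFrom H 0 N)
    (hk : 0 < (DJ ∩ DJ.image (k + ·)).card) :
    ((DJ ∩ DJ.image (k + ·)).card : ℝ) / ((DI ∩ DI.image (k + ·)).card : ℝ)
      = 1 / ∏ i ∈ Finset.range j, ((H i).card : ℝ) := by
  subst hDJ hDI
  set P := sumsetFrom H 0 j with hP
  set Q := sumsetFrom H j (N - j) with hQ
  set T := Q ∩ Q.image (k + ·) with hT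
  -- decomposition D_I = P + Q
  have hPQ : sumsetFrom H 0 N = P + Q := by
    have h := sumsetFrom_decomp H 0 j (N - j)
    rwa [show j + (N - j) = N by omega, Nat.zero_add] at h
  -- a witness in T
  obtain ⟨w, hw⟩ := Finset.card_pos.1 hk
  rw [hT, Finset.mem_inter, Finset.mem_image] at hw
  obtain ⟨hwQ, w', hw'Q, hww'⟩ := hw
  obtain ⟨e, he1, he2, he3⟩ := sum_rep N H h0 j (N - j) (by omega) w hwQ
  obtain ⟨e', he'1, he'2, he'3⟩ := sum_rep N H h0 j (N - j) (by omega) w' hw'Q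
  have hkee' : ∑ i ∈ Finset.range N, (e i - e' i) = k := by
    rw [Finset.sum_sub_distrib, he3, he'3]
    omega
  -- main cardinality identity
  have hcard : (sumsetFrom H 0 N ∩ (sumsetFrom H 0 N).image (k + ·)).card
      = P.card * T.card := by
    rw [← Finset.card_product]
    apply (Finset.card_bij (fun p _ => p.1 + p.2) ?_ ?_ ?_).symm
    · -- maps into the target
      intro p hp
      rw [Finset.mem_product] at hp
      obtain ⟨hp1, hp2⟩ := hp
      rw [hT, Finset.mem_inter, Finset.mem_image] at hp2
      obtain ⟨hp2Q, y', hy'Q, hy'⟩ := hp2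
      rw [Finset.mem_inter, Finset.mem_image]
      constructor
      · rw [hPQ]; exact Finset.add_mem_add hp1 hp2Q
      · refine ⟨p.1 + y', ?_, ?_⟩
        · rw [hPQ]; exact Finset.add_mem_add hp1 hy'Q
        · rw [← hy']; ring
    · -- injectivity
      intro p hp q hq hpq
      rw [Finset.mem_product] at hp hq
      obtain ⟨f, hf1, hf2, hf3⟩ := sum_rep N H h0 0 j (by omega) _ hp.1
      obtain ⟨g, hg1, hg2, hg3⟩ :=
        sum_rep N H h0 j (N - j) (by omega) _ (Finset.mem_inter.1 hp.2).1
      obtain ⟨f', hf'1, hf'2, hf'3⟩ := sum_rep N H h0 0 j (by omega) _ hq.1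
      obtain ⟨g', hg'1, hg'2, hg'3⟩ :=
        sum_rep N H h0 j (N - j) (by omega) _ (Finset.mem_inter.1 hq.2).1
      have hdm : ∀ i, i < N → (fun i => f i + g i) i ∈ H i := by
        intro i hi
        dsimp only
        by_cases h : i < j
        · rw [hg2 i (Or.inl h), add_zero]; exact hf1 i hi
        · rw [hf2 i (Or.inr (by omega)), zero_add]; exact hg1 i hi
      have hem : ∀ i, i < N → (fun i => f' i + g' i) i ∈ H i := by
        intro i hi
        dsimp only
        by_cases h : i < j
        · rw [hg'2 i (Or.inl h), add_zero]; exact hf'1 i hi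
        · rw [hf'2 i (Or.inr (by omega)), zero_add]; exact hg'1 i hi
      have hsum : ∑ i ∈ Finset.range N, (f i + g i)
          = ∑ i ∈ Finset.range N, (f' i + g' i) := by
        rw [Finset.sum_add_distrib, Finset.sum_add_distrib, hf3, hg3, hf'3, hg'3]
        exact hpq
      have hcomp := components_eq N H h0 huniq _ _ hdm hem hsum
      have h1 : p.1 = q.1 := by
        have key : ∀ (u : ℕ → ℤ) (v : ℕ → ℤ), (∀ i, (i < 0 ∨ 0 + j ≤ i) → u i = 0) →
            ∑ i ∈ Finset.range N, u i = ∑ i ∈ Finset.range j, (u i + v i)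
              - ∑ i ∈ Finset.range j, v i := by
          intro u v hu
          rw [Finset.sum_add_distrib, add_sub_cancel_right]
          exact Finset.sum_subset
            (Finset.range_subset_range.2 (by omega))
            (fun i _ hi => hu i (by simp at hi; omega)) |>.symm
        rw [← hf3, ← hf'3, key f g hf2, key f' g' hf'2]
        have : ∑ i ∈ Finset.range j, (f i + g i) = ∑ i ∈ Finset.range j, (f' i + g' i) :=
          Finset.sum_congr rfl (fun i hi => hcomp i (by simp at hi; omega))
        have hgg' : ∑ i ∈ Finset.range j, g i = ∑ i ∈ Finset.range j, g' i := by
          rw [Finset.sum_congr rfl (fun i hi => hg2 i (Or.inl (by simp at hi; omega))),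
            Finset.sum_congr rfl (fun i hi => hg'2 i (Or.inl (by simp at hi; omega)))]
        rw [this, hgg']
      have h2 : p.2 = q.2 := by
        rw [h1] at hpq
        exact add_left_cancel hpq
      exact Prod.ext h1 h2
    · -- surjectivity
      intro x hx
      rw [Finset.mem_inter, Finset.mem_image] at hx
      obtain ⟨hxD, z, hzD, hzx⟩ := hx
      obtain ⟨d, hd1, hd2, hd3⟩ := sum_rep N H h0 0 N (by omega) x hxD
      obtain ⟨d', hd'1, hd'2, hd'3⟩ := sum_rep N H h0 0 N (by omega) z hzD
      have hsum : ∑ i ∈ Finset.range N, (d i - d' i)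
          = ∑ i ∈ Finset.range N, (e i - e' i) := by
        rw [hkee', Finset.sum_sub_distrib, hd3, hd'3]
        omega
      have hcomp := huniq d d' e e' hd1 hd'1 he1 he'1 hsum
      have hlow : ∀ i, i < j → d i = d' i := by
        intro i hi
        have h := hcomp i (by omega)
        rw [he2 i (Or.inl hi), he'2 i (Or.inl hi)] at h
        omega
      -- build the pair
      set u := ∑ i ∈ Finset.Ico 0 j, d i with hu
      set y := ∑ i ∈ Finset.Ico j N, d i with hy
      set y' := ∑ i ∈ Finset.Ico j N, d' i with hy'
      have memP : ∀ (c : ℕ → ℤ), (∀ i, i < N → c i ∈ H i) →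
          (∑ i ∈ Finset.Ico 0 j, c i) ∈ P := by
        intro c hc
        rw [hP, mem_sumsetFrom]
        refine ⟨fun i => if i ∈ Finset.Ico 0 (0 + j) then c i else 0, ?_, ?_, ?_⟩
        · intro i hi
          dsimp only
          rw [if_pos hi]
          exact hc i (by simp at hi; omega)
        · intro i hi; dsimp only; rw [if_neg hi]
        · exact Finset.sum_congr (by rw [Nat.zero_add]) (fun i hi => by
            dsimp only
            rw [if_pos hi])
      have memQ : ∀ (c : ℕ → ℤ), (∀ i, i < N → c i ∈ H i) →
          (∑ i ∈ Finset.Ico j N, c i) ∈ Q := by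
        intro c hc
        rw [hQ, mem_sumsetFrom]
        refine ⟨fun i => if i ∈ Finset.Ico j (j + (N - j)) then c i else 0, ?_, ?_, ?_⟩
        · intro i hi
          dsimp only
          rw [if_pos hi]
          exact hc i (by simp at hi; omega)
        · intro i hi; dsimp only; rw [if_neg hi]
        · exact Finset.sum_congr (by rw [show (j + (N - j)) = N by omega]) (fun i hi => by
            dsimp only
            rw [if_pos hi])
      have huP : u ∈ P := memP d hd1
      have hyQ : y ∈ Q := memQ d hd1
      have hy'Q2 : y' ∈ Q := memQ d' hd'1
      have hsplit : ∀ (c : ℕ → ℤ), ∑ i ∈ Finset.Ico 0 j, c i + ∑ i ∈ Finset.Ico j N, c i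
          = ∑ i ∈ Finset.range N, c i := by
        intro c
        rw [Finset.range_eq_Ico]
        exact Finset.sum_Ico_consecutive _ (by omega) (by omega)
      have hksum : k = y - y' := by
        have h1 : ∑ i ∈ Finset.Ico 0 j, (d i - d' i) = 0 :=
          Finset.sum_eq_zero (fun i hi => by
            rw [hlow i (by simp at hi; omega)]; ring)
        have h2 := hsplit (fun i => d i - d' i)
        rw [h1, zero_add] at h2
        rw [hy, hy', ← Finset.sum_sub_distrib, h2, hsum, hkee']
      have hyT : y ∈ T := by
        rw [hT, Finset.mem_inter, Finset.mem_image]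
        exact ⟨hyQ, y', hy'Q2, by omega⟩
      refine ⟨(u, y), Finset.mem_product.2 ⟨huP, hyT⟩, ?_⟩
      dsimp only
      rw [hu, hy, hsplit d, hd3]
  -- final arithmetic
  have hPcard : P.card = ∏ i ∈ Finset.range j, (H i).card :=
    card_sumset N H h0 huniq j (le_of_lt hj)
  have hprodpos : 0 < ∏ i ∈ Finset.range j, (H i).card :=
    Finset.prod_pos (fun i hi =>
      Finset.card_pos.2 ⟨0, h0 i (lt_trans (Finset.mem_range.1 hi) hj)⟩)
  rw [hcard, hPcard]
  have hTne : ((T.card : ℝ)) ≠ 0 := by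
    have : (0:ℝ) < T.card := by exact_mod_cast hk
    exact this.ne'
  have hprodne : (∏ i ∈ Finset.range j, ((H i).card : ℝ)) ≠ 0 := by
    have : (0:ℝ) < ∏ i ∈ Finset.range j, ((H i).card : ℝ) := by
      rw [← Nat.cast_prod]
      exact_mod_cast hprodpos
    exact this.ne'
  rw [Nat.cast_mul, Nat.cast_prod,
    div_eq_div_iff (mul_ne_zero hprodne hTne) hprodne]
  ring
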